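/- arXiv:1503.01606 — 2 statements merged into one kernel-verified Lean document; each statement's English description precedes it below -/
import Mathlib

section
/- Let α ∈ (0,∞) be a real number that is not an even positive integer. Then the function F : ℂ → ℂ defined by F(z) = z·|z|^α is not real analytic on ℝ²; more precisely, viewing ℂ as a two-dimensional real normed space, F is not analytic over ℝ at the point 0 (¬ AnalyticAt ℝ F 0). -/
open MeasureTheory Filter Complex
open scoped ENNReal RealInnerProductSpace NNReal

noncomputable section

/-- Gaussian window `g₀(t) = e^{-π|t|²}`. -/
def gaussWin (d : ℕ) (t : EuclideanSpace ℝ (Fin d)) : ℝ :=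
  Real.exp (-Real.pi * ‖t‖ ^ 2)

/-- Short-time Fourier transform with Gaussian window. -/
def STFT (d : ℕ) (f : EuclideanSpace ℝ (Fin d) → ℂ)
    (x w : EuclideanSpace ℝ (Fin d)) : ℂ :=
  ∫ t : EuclideanSpace ℝ (Fin d),
    f t * (gaussWin d (t - x) : ℂ) *
      Complex.exp (-(2 * (Real.pi : ℂ) * Complex.I) * ((⟪w, t⟫ : ℝ) : ℂ))

/-- `L^p`-type norm of an `ℝ≥0∞`-valued function, with essential-sup modification at `p = ∞`. -/
def eLpNormENN {α : Type*} [MeasurableSpace α] (p : ℝ≥0∞) (g : α → ℝ≥0∞)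
    (μ : Measure α) : ℝ≥0∞ :=
  if p = 0 then 0
  else if p = ∞ then essSup g μ
  else (∫⁻ x, g x ^ p.toReal ∂μ) ^ (1 / p.toReal)

/-- Wiener amalgam norm `‖f‖_{W^{p,q}}`. -/
def WienerNorm (d : ℕ) (p q : ℝ≥0∞) (f : EuclideanSpace ℝ (Fin d) → ℂ) : ℝ≥0∞ :=
  eLpNormENN p (fun x => eLpNorm (fun w => STFT d f x w) q volume) volume

/-- Modulation norm `‖f‖_{M^{p,q}}`. -/
def ModNorm (d : ℕ) (p q : ℝ≥0∞) (f : EuclideanSpace ℝ (Fin d) → ℂ) : ℝ≥0∞ :=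
  eLpNormENN q (fun w => eLpNorm (fun x => STFT d f x w) p volume) volume

/-- Fourier transform `f̂(w) = ∫ f(t) e^{-2πi t·w} dt`. -/
def fourierTf (d : ℕ) (f : EuclideanSpace ℝ (Fin d) → ℂ)
    (w : EuclideanSpace ℝ (Fin d)) : ℂ :=
  ∫ t : EuclideanSpace ℝ (Fin d),
    f t * Complex.exp (-(2 * (Real.pi : ℂ) * Complex.I) * ((⟪t, w⟫ : ℝ) : ℂ))

/-- The lattice vector in `ℝ^d` corresponding to `m ∈ ℤ^d`. -/
def latVec (d : ℕ) (m : Fin d → ℤ) : EuclideanSpace ℝ (Fin d) :=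
  WithLp.toLp 2 (fun i => (m i : ℝ))

/-- The unit box `[0,1)^d`. -/
def unitBox (d : ℕ) : Set (EuclideanSpace ℝ (Fin d)) :=
  {x | ∀ i, x i ∈ Set.Ico (0 : ℝ) 1}

/-- Fourier coefficient of (the `ℤ^d`-periodization of) `f`. -/
def fourierCoeffP (d : ℕ) (f : EuclideanSpace ℝ (Fin d) → ℂ) (m : Fin d → ℤ) : ℂ :=
  ∫ x in unitBox d,
    f x * Complex.exp (-(2 * (Real.pi : ℂ) * Complex.I) * ((⟪latVec d m, x⟫ : ℝ) : ℂ))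

/-- `ℤ^d`-periodicity. -/
def ZdPeriodic (d : ℕ) (f : EuclideanSpace ℝ (Fin d) → ℂ) : Prop :=
  ∀ (m : Fin d → ℤ) (x : EuclideanSpace ℝ (Fin d)), f (x + latVec d m) = f x


theorem stmt5 (α : ℝ) (hα : 0 < α) (hne : ∀ k : ℕ, 0 < k → α ≠ 2 * k) :
    ¬ AnalyticAt ℝ (fun z : ℂ => z * ((‖z‖ ^ α : ℝ) : ℂ)) 0 := by
  intro hF
  set f : ℝ → ℂ := fun x => (x : ℂ) * ((|x| ^ α : ℝ) : ℂ) with hfdef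
  -- restriction to the real axis is analytic
  have hf : AnalyticAt ℝ f 0 := by
    have h1 : AnalyticAt ℝ (fun x : ℝ => (x : ℂ)) 0 := Complex.ofRealCLM.analyticAt 0
    have hF' : AnalyticAt ℝ (fun z : ℂ => z * ((‖z‖ ^ α : ℝ) : ℂ))
        (((0:ℝ) : ℂ)) := by simpa using hF
    have := hF'.comp h1
    simpa [Function.comp_def, hfdef, Complex.norm_real] using this
  -- f is not eventually zero
  have hnz : ¬ ∀ᶠ x in nhds (0:ℝ), f x = 0 := by
    intro h
    obtain ⟨ε, hε, h⟩ := Metric.eventually_nhds_iff.mp h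
    have hx : dist (ε/2) (0:ℝ) < ε := by
      rw [Real.dist_eq, sub_zero, abs_of_pos (half_pos hε)]; linarith
    have := h hx
    have hpos : (0:ℝ) < |ε/2| ^ α := Real.rpow_pos_of_pos (by positivity) α
    simp only [hfdef, mul_eq_zero, Complex.ofReal_eq_zero] at this
    rcases this with h' | h' <;> [linarith; linarith]
  have hord : analyticOrderAt f 0 ≠ ⊤ := fun h => hnz (analyticOrderAt_eq_top.mp h)
  obtain ⟨n, hn⟩ : ∃ n : ℕ, analyticOrderAt f 0 = n := by
    lift analyticOrderAt f 0 to ℕ using hord with n hn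
    exact ⟨n, rfl⟩
  obtain ⟨g, hg, hg0, heq⟩ := (hf.analyticOrderAt_eq_natCast).mp hn
  set β : ℝ := α + 1 - n with hβdef
  -- on the right, g x = x ^ β
  have hr : ∀ᶠ x in nhdsWithin (0:ℝ) (Set.Ioi 0), g x = ((x ^ β : ℝ) : ℂ) := by
    filter_upwards [heq.filter_mono nhdsWithin_le_nhds, self_mem_nhdsWithin] with x hx hxpos
    have hxpos : (0:ℝ) < x := hxpos
    rw [sub_zero] at hx
    have hxn : (x:ℝ) ^ n ≠ 0 := pow_ne_zero _ hxpos.ne'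
    have hgx : g x = ((x:ℝ)^n)⁻¹ • f x := ((inv_smul_eq_iff₀ hxn).mpr hx).symm
    have hreal : x ^ β = ((x ^ n)⁻¹ * (x * x ^ α)) := by
      rw [hβdef, Real.rpow_sub hxpos, Real.rpow_add_one hxpos.ne', Real.rpow_natCast]
      ring
    have hfx : f x = (((x * x ^ α : ℝ)) : ℂ) := by
      simp [hfdef, abs_of_pos hxpos]
    rw [hgx, hfx, real_smul, ← Complex.ofReal_mul, ← hreal]
  have hgc : Filter.Tendsto g (nhdsWithin (0:ℝ) (Set.Ioi 0)) (nhds (g 0)) :=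
    (hg.continuousAt.tendsto).mono_left nhdsWithin_le_nhds
  -- β = 0
  have hβ : β = 0 := by
    rcases lt_trichotomy β 0 with hb | hb | hb
    · -- g x * x^(-β) = 1 eventually, but tends to 0
      exfalso
      have h1 : Filter.Tendsto (fun x : ℝ => ((x ^ (-β) : ℝ) : ℂ))
          (nhdsWithin (0:ℝ) (Set.Ioi 0)) (nhds 0) := by
        have : Filter.Tendsto (fun x : ℝ => x ^ (-β)) (nhds (0:ℝ)) (nhds ((0:ℝ) ^ (-β))) :=
          (Real.continuousAt_rpow_const 0 (-β) (Or.inr (by linarith))).tendsto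
        rw [Real.zero_rpow (by linarith)] at this
        exact (Complex.continuous_ofReal.tendsto 0).comp (this.mono_left nhdsWithin_le_nhds)
      have h2 : Filter.Tendsto (fun x : ℝ => g x * ((x ^ (-β) : ℝ) : ℂ))
          (nhdsWithin (0:ℝ) (Set.Ioi 0)) (nhds (g 0 * 0)) := hgc.mul h1
      rw [mul_zero] at h2
      have h3 : (fun x : ℝ => g x * ((x ^ (-β) : ℝ) : ℂ)) =ᶠ[nhdsWithin (0:ℝ) (Set.Ioi 0)]
          (fun _ => (1:ℂ)) := by
        filter_upwards [hr, self_mem_nhdsWithin] with x hx hxpos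
        rw [hx, ← Complex.ofReal_mul, ← Real.rpow_add hxpos, add_neg_cancel, Real.rpow_zero,
          Complex.ofReal_one]
      have h4 := (h2.congr' h3)
      have := tendsto_nhds_unique h4 tendsto_const_nhds
      exact zero_ne_one this
    · exact hb
    · exfalso
      have h1 : Filter.Tendsto (fun x : ℝ => ((x ^ β : ℝ) : ℂ))
          (nhdsWithin (0:ℝ) (Set.Ioi 0)) (nhds 0) := by
        have : Filter.Tendsto (fun x : ℝ => x ^ β) (nhds (0:ℝ)) (nhds ((0:ℝ) ^ β)) :=
          (Real.continuousAt_rpow_const 0 β (Or.inr hb.le)).tendsto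
        rw [Real.zero_rpow hb.ne'] at this
        exact (Complex.continuous_ofReal.tendsto 0).comp (this.mono_left nhdsWithin_le_nhds)
      have := tendsto_nhds_unique (hgc.congr' hr) h1
      exact hg0 this
  have hnα : (n : ℝ) = α + 1 := by
    have : α + 1 - n = 0 := hβ
    linarith
  -- g 0 = 1
  have hg1 : g 0 = 1 := by
    have h3 : g =ᶠ[nhdsWithin (0:ℝ) (Set.Ioi 0)] (fun _ => (1:ℂ)) := by
      filter_upwards [hr] with x hx
      rw [hx, hβ, Real.rpow_zero, Complex.ofReal_one]
    exact tendsto_nhds_unique (hgc.congr' h3) tendsto_const_nhds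
  -- on the left, g x = (-1)^(n+1)
  have hl : ∀ᶠ x in nhdsWithin (0:ℝ) (Set.Iio 0),
      g x = (((-1:ℝ) ^ (n+1) : ℝ) : ℂ) := by
    filter_upwards [heq.filter_mono nhdsWithin_le_nhds, self_mem_nhdsWithin] with x hx hxneg
    have hxneg : x < (0:ℝ) := hxneg
    have hy : (0:ℝ) < -x := by linarith
    rw [sub_zero] at hx
    have hxn : (x:ℝ) ^ n ≠ 0 := pow_ne_zero _ hxneg.ne
    have hgx : g x = ((x:ℝ)^n)⁻¹ • f x := ((inv_smul_eq_iff₀ hxn).mpr hx).symm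
    have hreal : ((x ^ n)⁻¹ * (x * (-x) ^ α)) = (-1:ℝ) ^ (n+1) := by
      have h1 : x * (-x) ^ α = -((-x) ^ n) := by
        have h2 : (-x) ^ α * (-x) = (-x) ^ (α + 1) := (Real.rpow_add_one hy.ne' α).symm
        calc x * (-x) ^ α = -((-x) ^ α * (-x)) := by ring
          _ = -((-x) ^ (α+1)) := by rw [h2]
          _ = -((-x) ^ ((n:ℕ):ℝ)) := by rw [hnα]
          _ = -((-x) ^ n) := by rw [Real.rpow_natCast]
      rw [inv_mul_eq_div, div_eq_iff hxn, h1, neg_pow, pow_succ]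
      ring
    have hfx : f x = (((x * (-x) ^ α : ℝ)) : ℂ) := by
      simp [hfdef, abs_of_neg hxneg]
    rw [hgx, hfx, real_smul, ← Complex.ofReal_mul, hreal]
  -- hence g 0 = (-1)^(n+1)
  have hgl : Filter.Tendsto g (nhdsWithin (0:ℝ) (Set.Iio 0)) (nhds (g 0)) :=
    (hg.continuousAt.tendsto).mono_left nhdsWithin_le_nhds
  have hgneg : g 0 = (((-1:ℝ) ^ (n+1) : ℝ) : ℂ) :=
    tendsto_nhds_unique (hgl.congr' hl) tendsto_const_nhds
  have hodd : (-1:ℝ) ^ (n+1) = 1 := by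
    have := hgneg.symm.trans hg1
    exact_mod_cast this
  have hevenn1 : Even (n+1) := by
    rwa [neg_one_pow_eq_one_iff_even] at hodd
    norm_num
  have hoddn : Odd n := Nat.not_even_iff_odd.mp (Nat.even_add_one.mp hevenn1)
  obtain ⟨k, hk⟩ := hoddn
  have hn1 : (1:ℝ) < n := by rw [hnα]; linarith
  have hn1' : 1 < n := by exact_mod_cast hn1
  refine hne k (by omega) ?_
  have : (n:ℝ) = 2*k+1 := by rw [hk]; push_cast; ring
  rw [this] at hnα
  linarith


end
end

section
/- Let d ≥ 1, let f : ℝ^d → ℂ be integrable, let k : ℝ^d → ℂ be a Schwartz function, and let γ₀ ∈ ℝ^d. For λ > 0 define k_λ(x) = e^{2πi γ₀·x} λ^{-d} k(x/λ). Then ∫_{ℝ^d} | (f*k_λ)(x) − f̂(γ₀) k_λ(x) | dx → 0 as λ → ∞, i.e. the L¹ norm of f*k_λ − f̂(γ₀)k_λ tends to 0. -/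
open MeasureTheory Filter Complex
open scoped ENNReal RealInnerProductSpace NNReal

noncomputable section

open scoped Topology
open Module

namespace Stmt19Aux

variable {d : ℕ}

local notation "Ed" => EuclideanSpace ℝ (Fin d)

lemma decay_bound (k : SchwartzMap Ed ℂ) :
    ∃ C : ℝ, 0 ≤ C ∧ ∀ x : Ed, ‖k x‖ ≤ C * (1 + ‖x‖) ^ (-((d : ℝ) + 1)) := by
  set S : ℝ :=
    2 ^ (d + 1) * (Finset.Iic ((d + 1, 0) : ℕ × ℕ)).sup
      (fun m => SchwartzMap.seminorm ℝ m.1 m.2) k with hS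
  have hS0 : 0 ≤ S := by positivity
  refine ⟨S, hS0, fun x => ?_⟩
  have h := SchwartzMap.one_add_le_sup_seminorm_apply (𝕜 := ℝ) (m := (d + 1, 0))
    le_rfl le_rfl k x
  rw [norm_iteratedFDeriv_zero] at h
  have hx : (0 : ℝ) < 1 + ‖x‖ := by positivity
  have hpow : (1 + ‖x‖) ^ (-((d : ℝ) + 1)) = ((1 + ‖x‖) ^ (d + 1 : ℕ))⁻¹ := by
    rw [← Real.rpow_natCast (1 + ‖x‖) (d + 1), ← Real.rpow_neg hx.le]
    norm_num
  rw [hpow, ← div_eq_mul_inv, le_div_iff₀ (pow_pos hx _), mul_comm]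
  exact h




lemma T_nonneg (k : SchwartzMap Ed ℂ) (v : Ed) :
    0 ≤ ∫ u : Ed, ‖k (u - v) - k u‖ :=
  integral_nonneg fun u => norm_nonneg _

lemma T_le (k : SchwartzMap Ed ℂ) (v : Ed) :
    (∫ u : Ed, ‖k (u - v) - k u‖) ≤ 2 * ∫ u : Ed, ‖k u‖ := by
  have h1 : Integrable (fun u : Ed => k (u - v)) volume :=
    (k.integrable (μ := volume)).comp_sub_right v
  calc (∫ u : Ed, ‖k (u - v) - k u‖)
      ≤ ∫ u : Ed, (‖k (u - v)‖ + ‖k u‖) :=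
        integral_mono (h1.sub (k.integrable (μ := volume))).norm
          (h1.norm.add (k.integrable (μ := volume)).norm)
          (fun u => norm_sub_le _ _)
    _ = (∫ u : Ed, ‖k (u - v)‖) + ∫ u : Ed, ‖k u‖ :=
        integral_add h1.norm (k.integrable (μ := volume)).norm
    _ = 2 * ∫ u : Ed, ‖k u‖ := by
        rw [integral_sub_right_eq_self (fun u : Ed => ‖k u‖) v]; ring

lemma T_zero (k : SchwartzMap Ed ℂ) : (∫ u : Ed, ‖k (u - 0) - k u‖) = 0 := by
  simp

lemma T_continuous (k : SchwartzMap Ed ℂ) :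
    Continuous (fun v : Ed => ∫ u : Ed, ‖k (u - v) - k u‖) := by
  rw [continuous_iff_continuousAt]
  intro v₀
  obtain ⟨C, hC0, hC⟩ := decay_bound k
  set r : ℝ := (d : ℝ) + 1 with hr_def
  have hr0 : 0 ≤ r := by positivity
  have hfr : (finrank ℝ Ed : ℝ) < r := by
    rw [finrank_euclideanSpace_fin]; exact lt_add_one _
  set R : ℝ := ‖v₀‖ + 1 with hR
  have hR0 : (0 : ℝ) ≤ R := by positivity
  set bound : Ed → ℝ :=
    fun u => C * (1 + R) ^ r * (1 + ‖u‖) ^ (-r) + C * (1 + ‖u‖) ^ (-r) with hbound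
  have hbint : Integrable bound volume :=
    ((integrable_one_add_norm hfr).const_mul _).add
      ((integrable_one_add_norm hfr).const_mul _)
  have hcont : ∀ v : Ed, Continuous fun u : Ed => ‖k (u - v) - k u‖ := fun v =>
    ((k.continuous.comp (continuous_id.sub continuous_const)).sub k.continuous).norm
  refine tendsto_integral_filter_of_dominated_convergence bound
    (Eventually.of_forall fun v => (hcont v).aestronglyMeasurable) ?_ hbint
    (Eventually.of_forall fun u => ?_)
  · filter_upwards [Metric.closedBall_mem_nhds v₀ one_pos] with v hv
    refine Eventually.of_forall fun u => ?_
    have hvn : ‖v‖ ≤ R := by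
      have := norm_sub_norm_le v v₀
      rw [Metric.mem_closedBall, dist_eq_norm] at hv
      simpa [hR] using by linarith
    have ha : (0 : ℝ) < 1 + ‖u - v‖ := by positivity
    have hb : (0 : ℝ) < 1 + ‖u‖ := by positivity
    have hab : 1 + ‖u‖ ≤ (1 + R) * (1 + ‖u - v‖) := by
      have h1 : ‖u‖ - ‖v‖ ≤ ‖u - v‖ := norm_sub_norm_le u v
      have h2 : (1 + R) * (1 + ‖u - v‖) = 1 + R + (1 + R) * ‖u - v‖ := by ring
      have h3 : ‖u - v‖ ≤ (1 + R) * ‖u - v‖ := by nlinarith [norm_nonneg (u - v)]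
      nlinarith [norm_nonneg (u - v)]
    have hkey : (1 + ‖u - v‖) ^ (-r) ≤ (1 + R) ^ r * (1 + ‖u‖) ^ (-r) := by
      have h1 : ((1 + ‖u‖) / (1 + ‖u - v‖)) ^ r ≤ (1 + R) ^ r :=
        Real.rpow_le_rpow (by positivity) ((div_le_iff₀ ha).mpr (by linarith)) hr0
      have h2 : (1 + ‖u - v‖) ^ (-r)
          = ((1 + ‖u‖) / (1 + ‖u - v‖)) ^ r * (1 + ‖u‖) ^ (-r) := by
        rw [Real.div_rpow hb.le ha.le, Real.rpow_neg hb.le, Real.rpow_neg ha.le]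
        field_simp
      rw [h2]
      exact mul_le_mul_of_nonneg_right h1 (Real.rpow_nonneg hb.le _)
    rw [Real.norm_of_nonneg (norm_nonneg _)]
    calc ‖k (u - v) - k u‖ ≤ ‖k (u - v)‖ + ‖k u‖ := norm_sub_le _ _
      _ ≤ C * ((1 + R) ^ r * (1 + ‖u‖) ^ (-r)) + C * (1 + ‖u‖) ^ (-r) := by
          exact add_le_add ((hC _).trans (mul_le_mul_of_nonneg_left hkey hC0)) (hC u)
      _ = bound u := by rw [hbound]; ring_nf
  · exact ((k.continuous.comp (continuous_const.sub continuous_id)).sub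
      continuous_const).norm.tendsto v₀


lemma key_est (f : Ed → ℂ) (hfi : Integrable f volume)
    (k : SchwartzMap Ed ℂ) (γ₀ : Ed) {lam : ℝ} (hlam : 1 ≤ lam) :
    (∫ x : Ed,
        ‖(∫ y : Ed,
            f y * (Complex.exp ((2 * (Real.pi : ℂ) * Complex.I) *
                ((⟪γ₀, x - y⟫ : ℝ) : ℂ)) *
              ((((lam ^ d)⁻¹ : ℝ) : ℂ) * k (lam⁻¹ • (x - y))))) -
          _root_.fourierTf d f γ₀ *
            (Complex.exp ((2 * (Real.pi : ℂ) * Complex.I) * ((⟪γ₀, x⟫ : ℝ) : ℂ)) *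
              ((((lam ^ d)⁻¹ : ℝ) : ℂ) * k (lam⁻¹ • x)))‖)
      ≤ ∫ y : Ed, ‖f y‖ * ∫ u : Ed, ‖k (u - lam⁻¹ • y) - k u‖ := by
  have hlam0 : (0 : ℝ) < lam := zero_lt_one.trans_le hlam
  set ε : ℝ := lam⁻¹ with hε
  have hε0 : 0 < ε := inv_pos.mpr hlam0
  set c : ℝ := (lam ^ d)⁻¹ with hc
  have hc0 : 0 < c := by positivity
  obtain ⟨Ck, hCk0, hCk⟩ := decay_bound k
  have hkbd : ∀ z : Ed, ‖k z‖ ≤ Ck := by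
    intro z
    refine (hCk z).trans (mul_le_of_le_one_right hCk0 ?_)
    exact Real.rpow_le_one_of_one_le_of_nonpos
      (by linarith [norm_nonneg z]) (neg_nonpos.mpr (by positivity))
  have hP1 : ∀ a : ℝ, ‖Complex.exp ((2 * (Real.pi : ℂ) * Complex.I) * (a : ℂ))‖ = 1 := by
    intro a
    have h : (2 * (Real.pi : ℂ) * Complex.I) * (a : ℂ)
        = ((2 * Real.pi * a : ℝ) : ℂ) * Complex.I := by push_cast; ring
    rw [h, Complex.norm_exp_ofReal_mul_I]
  have hP2 : ∀ a : ℝ, ‖Complex.exp (-(2 * (Real.pi : ℂ) * Complex.I) * (a : ℂ))‖ = 1 := by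
    intro a
    have h : (-(2 * (Real.pi : ℂ) * Complex.I)) * (a : ℂ)
        = ((-(2 * Real.pi * a) : ℝ) : ℂ) * Complex.I := by push_cast; ring
    rw [h, Complex.norm_exp_ofReal_mul_I]
  set F : Ed → Ed → ℂ := fun x y =>
    f y * (Complex.exp ((2 * (Real.pi : ℂ) * Complex.I) * ((⟪γ₀, x - y⟫ : ℝ) : ℂ)) *
      ((c : ℂ) * (k (ε • x - ε • y) - k (ε • x)))) with hF
  have hFnorm : ∀ x y, ‖F x y‖ = ‖f y‖ * (c * ‖k (ε • x - ε • y) - k (ε • x)‖) := by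
    intro x y
    rw [hF]
    simp only
    rw [norm_mul, norm_mul, hP1, one_mul, norm_mul, Complex.norm_real,
      Real.norm_of_nonneg hc0.le]
  have hky : ∀ y : Ed, Integrable (fun x : Ed => k (ε • x - ε • y)) volume := by
    intro y
    exact ((k.integrable (μ := volume)).comp_sub_right (ε • y)).comp_smul hε0.ne'
  have hkx : Integrable (fun x : Ed => k (ε • x)) volume :=
    (k.integrable (μ := volume)).comp_smul hε0.ne'
  have hax : ∀ y : Ed, Integrable (fun x : Ed => F x y) volume := by
    intro y
    have hint : Integrable (fun x : Ed => (c : ℂ) * (k (ε • x - ε • y) - k (ε • x)))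
        volume := ((hky y).sub hkx).const_mul _
    have hinner : Continuous fun x : Ed => (⟪γ₀, x - y⟫ : ℝ) :=
      continuous_const.inner (continuous_id.sub continuous_const)
    have hcontE : Continuous fun x : Ed =>
        Complex.exp ((2 * (Real.pi : ℂ) * Complex.I) * ((⟪γ₀, x - y⟫ : ℝ) : ℂ)) :=
      Complex.continuous_exp.comp
        (continuous_const.mul (Complex.continuous_ofReal.comp hinner))
    have hb := hint.bdd_mul (c := 1) hcontE.aestronglyMeasurable (Eventually.of_forall fun x => le_of_eq (hP1 _))
    exact hb.const_mul (f y)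
  have hCy : ∀ y : Ed, (∫ x : Ed, ‖F x y‖)
      = ‖f y‖ * ∫ u : Ed, ‖k (u - ε • y) - k u‖ := by
    intro y
    have h1 : (∫ x : Ed, ‖F x y‖)
        = ∫ x : Ed, ‖f y‖ * (c * ‖k (ε • x - ε • y) - k (ε • x)‖) := by
      simp_rw [hFnorm]
    rw [h1, integral_const_mul, integral_const_mul]
    congr 1
    have h2 : (∫ x : Ed, ‖k (ε • x - ε • y) - k (ε • x)‖)
        = |(ε ^ finrank ℝ Ed)⁻¹| • ∫ u : Ed, ‖k (u - ε • y) - k u‖ :=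
      Measure.integral_comp_smul volume (fun u : Ed => ‖k (u - ε • y) - k u‖) ε
    rw [h2, smul_eq_mul, finrank_euclideanSpace_fin]
    have h3 : |((ε : ℝ) ^ d)⁻¹| = lam ^ d := by
      rw [hε, inv_pow, inv_inv, abs_of_pos (by positivity)]
    rw [h3, ← mul_assoc]
    have h4 : c * lam ^ d = 1 := by
      rw [hc]; field_simp
    rw [h4, one_mul]
  have hFm : AEStronglyMeasurable (fun p : Ed × Ed => F p.1 p.2)
      (volume.prod volume) := by
    have h1 : AEStronglyMeasurable (fun p : Ed × Ed => f p.2) (volume.prod volume) :=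
      hfi.aestronglyMeasurable.comp_quasiMeasurePreserving Measure.quasiMeasurePreserving_snd
    have hinner2 : Continuous fun p : Ed × Ed => (⟪γ₀, p.1 - p.2⟫ : ℝ) :=
      continuous_const.inner (continuous_fst.sub continuous_snd)
    have h2 : Continuous fun p : Ed × Ed =>
        Complex.exp ((2 * (Real.pi : ℂ) * Complex.I) * ((⟪γ₀, p.1 - p.2⟫ : ℝ) : ℂ)) *
          ((c : ℂ) * (k (ε • p.1 - ε • p.2) - k (ε • p.1))) :=
      (Complex.continuous_exp.comp
        (continuous_const.mul (Complex.continuous_ofReal.comp hinner2))).mul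
        (continuous_const.mul
          ((k.continuous.comp ((continuous_fst.const_smul ε).sub
              (continuous_snd.const_smul ε))).sub
            (k.continuous.comp (continuous_fst.const_smul ε))))
    exact h1.mul h2.aestronglyMeasurable
  have hFint : Integrable (fun p : Ed × Ed => F p.1 p.2) (volume.prod volume) := by
    rw [integrable_prod_iff' hFm]
    constructor
    · exact Eventually.of_forall hax
    · refine (hfi.norm.bdd_mul (c := 2 * ∫ u : Ed, ‖k u‖)
        (((T_continuous k).comp (continuous_const_smul ε)).aestronglyMeasurable)
        (Eventually.of_forall fun y => ?_)).congr
        (Eventually.of_forall fun y => ?_)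
      · show ‖∫ u : Ed, ‖k (u - ε • y) - k u‖‖ ≤ _
        rw [Real.norm_of_nonneg (T_nonneg k _)]
        exact T_le k _
      · show (∫ u : Ed, ‖k (u - ε • y) - k u‖) * ‖f y‖ = ∫ x : Ed, ‖F x y‖
        rw [hCy y, mul_comm]
  have hA : ∀ x : Ed,
      (∫ y : Ed, f y * (Complex.exp ((2 * (Real.pi : ℂ) * Complex.I) *
          ((⟪γ₀, x - y⟫ : ℝ) : ℂ)) * ((c : ℂ) * k (ε • (x - y))))) -
        _root_.fourierTf d f γ₀ * (Complex.exp ((2 * (Real.pi : ℂ) * Complex.I) *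
          ((⟪γ₀, x⟫ : ℝ) : ℂ)) * ((c : ℂ) * k (ε • x))) = ∫ y : Ed, F x y := by
    intro x
    set W : ℂ := Complex.exp ((2 * (Real.pi : ℂ) * Complex.I) * ((⟪γ₀, x⟫ : ℝ) : ℂ)) *
      ((c : ℂ) * k (ε • x)) with hW
    have hinner : Continuous fun y : Ed => (⟪γ₀, x - y⟫ : ℝ) :=
      continuous_const.inner (continuous_const.sub continuous_id)
    have h1 : Integrable (fun y : Ed =>
        f y * (Complex.exp ((2 * (Real.pi : ℂ) * Complex.I) * ((⟪γ₀, x - y⟫ : ℝ) : ℂ)) *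
          ((c : ℂ) * k (ε • (x - y))))) volume := by
      have hm : Continuous fun y : Ed =>
          Complex.exp ((2 * (Real.pi : ℂ) * Complex.I) * ((⟪γ₀, x - y⟫ : ℝ) : ℂ)) *
            ((c : ℂ) * k (ε • (x - y))) := by
        refine (Complex.continuous_exp.comp (continuous_const.mul
          (Complex.continuous_ofReal.comp hinner))).mul
          (continuous_const.mul (k.continuous.comp ?_))
        exact (continuous_const.sub continuous_id).const_smul ε
      refine (hfi.bdd_mul (c := c * Ck) hm.aestronglyMeasurable (Eventually.of_forall fun y => ?_)).congr
        (Eventually.of_forall fun y => mul_comm _ _)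
      rw [norm_mul, hP1, one_mul, norm_mul, Complex.norm_real, Real.norm_of_nonneg hc0.le]
      exact mul_le_mul_of_nonneg_left (hkbd _) hc0.le
    have h2 : Integrable (fun y : Ed =>
        (f y * Complex.exp (-(2 * (Real.pi : ℂ) * Complex.I) * ((⟪y, γ₀⟫ : ℝ) : ℂ))) * W)
        volume := by
      have hm : Continuous fun y : Ed =>
          Complex.exp (-(2 * (Real.pi : ℂ) * Complex.I) * ((⟪y, γ₀⟫ : ℝ) : ℂ)) :=
        Complex.continuous_exp.comp (continuous_const.mul (Complex.continuous_ofReal.comp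
          (continuous_id.inner continuous_const)))
      exact ((hfi.bdd_mul (c := 1) hm.aestronglyMeasurable (Eventually.of_forall fun y => le_of_eq (hP2 _))).congr
        (Eventually.of_forall fun y => mul_comm _ _)).mul_const W
    have hfour : _root_.fourierTf d f γ₀ * W = ∫ y : Ed,
        (f y * Complex.exp (-(2 * (Real.pi : ℂ) * Complex.I) * ((⟪y, γ₀⟫ : ℝ) : ℂ))) * W := by
      rw [_root_.fourierTf, ← integral_mul_const]
    rw [hfour, ← integral_sub h1 h2]
    refine integral_congr_ae (Eventually.of_forall fun y => ?_)
    have hip : (⟪γ₀, x - y⟫ : ℝ) = ⟪γ₀, x⟫ - ⟪y, γ₀⟫ := by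
      rw [inner_sub_right, real_inner_comm γ₀ y]
    have hE : Complex.exp ((2 * (Real.pi : ℂ) * Complex.I) * ((⟪γ₀, x - y⟫ : ℝ) : ℂ))
        = Complex.exp (-(2 * (Real.pi : ℂ) * Complex.I) * ((⟪y, γ₀⟫ : ℝ) : ℂ)) *
          Complex.exp ((2 * (Real.pi : ℂ) * Complex.I) * ((⟪γ₀, x⟫ : ℝ) : ℂ)) := by
      rw [← Complex.exp_add]
      congr 1
      rw [hip]
      push_cast
      ring
    show _ = F x y
    rw [hF]
    simp only
    rw [smul_sub, hW, hE]
    ring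
  calc (∫ x : Ed,
        ‖(∫ y : Ed,
            f y * (Complex.exp ((2 * (Real.pi : ℂ) * Complex.I) *
                ((⟪γ₀, x - y⟫ : ℝ) : ℂ)) *
              ((c : ℂ) * k (ε • (x - y))))) -
          _root_.fourierTf d f γ₀ *
            (Complex.exp ((2 * (Real.pi : ℂ) * Complex.I) * ((⟪γ₀, x⟫ : ℝ) : ℂ)) *
              ((c : ℂ) * k (ε • x)))‖)
      = ∫ x : Ed, ‖∫ y : Ed, F x y‖ := by
        exact integral_congr_ae (Eventually.of_forall fun x =>
          congrArg norm (hA x))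
    _ ≤ ∫ x : Ed, ∫ y : Ed, ‖F x y‖ :=
        integral_mono hFint.integral_prod_left.norm hFint.integral_norm_prod_left
          (fun x => norm_integral_le_integral_norm _)
    _ = ∫ y : Ed, ∫ x : Ed, ‖F x y‖ := integral_integral_swap hFint.norm
    _ = ∫ y : Ed, ‖f y‖ * ∫ u : Ed, ‖k (u - ε • y) - k u‖ :=
        integral_congr_ae (Eventually.of_forall hCy)


end Stmt19Aux

theorem stmt19 (d : ℕ) (hd : 1 ≤ d)
    (f : EuclideanSpace ℝ (Fin d) → ℂ) (hfi : Integrable f)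
    (k : SchwartzMap (EuclideanSpace ℝ (Fin d)) ℂ)
    (γ₀ : EuclideanSpace ℝ (Fin d)) :
    Filter.Tendsto
      (fun lam : ℝ =>
        ∫ x : EuclideanSpace ℝ (Fin d),
          ‖(∫ y : EuclideanSpace ℝ (Fin d),
              f y * (Complex.exp ((2 * (Real.pi : ℂ) * Complex.I) *
                  ((⟪γ₀, x - y⟫ : ℝ) : ℂ)) *
                ((((lam ^ d)⁻¹ : ℝ) : ℂ) * k (lam⁻¹ • (x - y))))) -
            fourierTf d f γ₀ *
              (Complex.exp ((2 * (Real.pi : ℂ) * Complex.I) * ((⟪γ₀, x⟫ : ℝ) : ℂ)) *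
                ((((lam ^ d)⁻¹ : ℝ) : ℂ) * k (lam⁻¹ • x)))‖)
      Filter.atTop (nhds 0) := by
  have hG : Tendsto (fun lam : ℝ =>
      ∫ y : EuclideanSpace ℝ (Fin d), ‖f y‖ * ∫ u : EuclideanSpace ℝ (Fin d),
        ‖k (u - lam⁻¹ • y) - k u‖) atTop (𝓝 0) := by
    have hmeas : ∀ᶠ lam : ℝ in atTop, AEStronglyMeasurable
        (fun y : EuclideanSpace ℝ (Fin d) =>
          ‖f y‖ * ∫ u : EuclideanSpace ℝ (Fin d), ‖k (u - lam⁻¹ • y) - k u‖) volume :=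
      Eventually.of_forall fun lam =>
        hfi.norm.aestronglyMeasurable.mul
          ((Stmt19Aux.T_continuous k).comp (continuous_const_smul (lam⁻¹ : ℝ))).aestronglyMeasurable
    have hbound : ∀ᶠ lam : ℝ in atTop, ∀ᵐ y : EuclideanSpace ℝ (Fin d) ∂volume,
        ‖‖f y‖ * ∫ u : EuclideanSpace ℝ (Fin d), ‖k (u - lam⁻¹ • y) - k u‖‖
          ≤ ‖f y‖ * (2 * ∫ u : EuclideanSpace ℝ (Fin d), ‖k u‖) := by
      refine Eventually.of_forall fun lam => Eventually.of_forall fun y => ?_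
      rw [Real.norm_of_nonneg (mul_nonneg (norm_nonneg _) (Stmt19Aux.T_nonneg k _))]
      exact mul_le_mul_of_nonneg_left (Stmt19Aux.T_le k _) (norm_nonneg _)
    have hbint : Integrable (fun y : EuclideanSpace ℝ (Fin d) =>
        ‖f y‖ * (2 * ∫ u : EuclideanSpace ℝ (Fin d), ‖k u‖)) volume :=
      hfi.norm.mul_const _
    have hlim : ∀ᵐ y : EuclideanSpace ℝ (Fin d) ∂volume,
        Tendsto (fun lam : ℝ =>
          ‖f y‖ * ∫ u : EuclideanSpace ℝ (Fin d), ‖k (u - lam⁻¹ • y) - k u‖)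
          atTop (𝓝 0) := by
      refine Eventually.of_forall fun y => ?_
      have h1 : Tendsto (fun lam : ℝ => lam⁻¹ • y) atTop
          (𝓝 (0 : EuclideanSpace ℝ (Fin d))) := by
        simpa using (tendsto_inv_atTop_zero :
          Tendsto (fun r : ℝ => r⁻¹) atTop (𝓝 (0 : ℝ))).smul_const y
      have h2 := ((Stmt19Aux.T_continuous k).tendsto 0).comp h1
      simp only [Function.comp_def, sub_zero, sub_self, norm_zero, integral_zero] at h2
      have h3 := h2.const_mul ‖f y‖
      rw [mul_zero] at h3
      exact h3
    have h := tendsto_integral_filter_of_dominated_convergence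
      (f := fun _ : EuclideanSpace ℝ (Fin d) => (0 : ℝ)) _ hmeas hbound hbint hlim
    simpa using h
  refine tendsto_of_tendsto_of_tendsto_of_le_of_le' tendsto_const_nhds hG ?_ ?_
  · exact Eventually.of_forall fun lam => integral_nonneg fun x => norm_nonneg _
  · filter_upwards [eventually_ge_atTop (1 : ℝ)] with lam hlam
    exact Stmt19Aux.key_est f hfi k γ₀ hlam


end
end
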